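/- Consider the general (not necessarily zero-sum) local game: player 1 minimizes over x the function xᵀa + xᵀB y + (1/(2η))xᵀx and player 2 minimizes over y the function yᵀc + yᵀC x + (1/(2η))yᵀy, where a ∈ ℝ^m, c ∈ ℝ^n, B ∈ ℝ^{m×n}, C ∈ ℝ^{n×m}, η > 0, and Id − η²BC is invertible. Then (x*, y*) = (−η(Id − η²BC)⁻¹(a − ηBc), −η(Id − η²CB)⁻¹(c − ηCa)) is a pure Nash equilibrium: x* minimizes player 1's cost given y*, and y* minimizes player 2's cost given x*. -/
import Mathlib

open Matrix

private lemma quad_min {m : ℕ} (η : ℝ) (hη : 0 < η) (d x : Fin m → ℝ) :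
    (-η • d) ⬝ᵥ d + (1 / (2 * η)) * ((-η • d) ⬝ᵥ (-η • d)) ≤
      x ⬝ᵥ d + (1 / (2 * η)) * (x ⬝ᵥ x) := by
  have h : 0 ≤ (x + η • d) ⬝ᵥ (x + η • d) :=
    Finset.sum_nonneg fun i _ => mul_self_nonneg _
  have hcomm : d ⬝ᵥ x = x ⬝ᵥ d := dotProduct_comm d x
  simp only [add_dotProduct, dotProduct_add, smul_dotProduct, dotProduct_smul,
    smul_eq_mul, hcomm] at h ⊢
  have h2η : 0 < 2 * η := by linarith
  set p := x ⬝ᵥ d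
  set q := x ⬝ᵥ x
  set r := d ⬝ᵥ d
  have hh : 0 ≤ q + 2 * η * p + η ^ 2 * r := by nlinarith [h]
  have hid : p + 1 / (2 * η) * q - (-η * r + 1 / (2 * η) * (-η * (-η * r)))
      = (q + 2 * η * p + η ^ 2 * r) / (2 * η) := by
    field_simp
    ring
  have hdiv : 0 ≤ (q + 2 * η * p + η ^ 2 * r) / (2 * η) := div_nonneg hh h2η.le
  linarith [hid, hdiv]

/-- general (not necessarily zero-sum) quadratic-regularized bilinear local
game: the closed-form CGD pair is a pure Nash equilibrium. -/
theorem stmt_14 (m n : ℕ) (a : Fin m → ℝ) (c : Fin n → ℝ)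
    (B : Matrix (Fin m) (Fin n) ℝ) (C : Matrix (Fin n) (Fin m) ℝ) (η : ℝ) (hη : 0 < η)
    (hinv : IsUnit ((1 : Matrix (Fin m) (Fin m) ℝ) - η ^ 2 • (B * C))) :
    let P1 : (Fin m → ℝ) → (Fin n → ℝ) → ℝ := fun x y =>
      x ⬝ᵥ a + x ⬝ᵥ B.mulVec y + (1 / (2 * η)) * (x ⬝ᵥ x)
    let P2 : (Fin n → ℝ) → (Fin m → ℝ) → ℝ := fun y x =>
      y ⬝ᵥ c + y ⬝ᵥ C.mulVec x + (1 / (2 * η)) * (y ⬝ᵥ y)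
    let xstar : Fin m → ℝ :=
      -η • ((1 - η ^ 2 • (B * C))⁻¹.mulVec (a - η • B.mulVec c))
    let ystar : Fin n → ℝ :=
      -η • ((1 - η ^ 2 • (C * B))⁻¹.mulVec (c - η • C.mulVec a))
    (∀ x, P1 xstar ystar ≤ P1 x ystar) ∧ (∀ y, P2 ystar xstar ≤ P2 y xstar) := by
  intro P1 P2 xstar ystar
  set A : Matrix (Fin m) (Fin m) ℝ := 1 - η ^ 2 • (B * C) with hA
  set A' : Matrix (Fin n) (Fin n) ℝ := 1 - η ^ 2 • (C * B) with hA'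
  have hdet : IsUnit A.det := (Matrix.isUnit_iff_isUnit_det A).mp hinv
  have hdet' : IsUnit A'.det := by
    have : A'.det = A.det := by
      rw [hA, hA',
        show (η ^ 2 • (C * B) : Matrix (Fin n) (Fin n) ℝ) = (η ^ 2 • C) * B from
          (Matrix.smul_mul _ _ _).symm,
        show (η ^ 2 • (B * C) : Matrix (Fin m) (Fin m) ℝ) = B * (η ^ 2 • C) from
          (Matrix.mul_smul _ _ _).symm]
      exact Matrix.det_one_sub_mul_comm (η ^ 2 • C) B
    rw [this]; exact hdet
  have hMA : A⁻¹ * A = 1 := Matrix.nonsing_inv_mul A hdet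
  have hAM : A * A⁻¹ = 1 := Matrix.mul_nonsing_inv A hdet
  have hNA : A'⁻¹ * A' = 1 := Matrix.nonsing_inv_mul A' hdet'
  have hAN : A' * A'⁻¹ = 1 := Matrix.mul_nonsing_inv A' hdet'
  have hBA : B * A' = A * B := by
    rw [hA, hA', Matrix.mul_sub, Matrix.sub_mul, Matrix.mul_one, Matrix.one_mul,
      Matrix.mul_smul, Matrix.smul_mul, Matrix.mul_assoc]
  have hBN : B * A'⁻¹ = A⁻¹ * B := by
    calc B * A'⁻¹ = A⁻¹ * A * (B * A'⁻¹) := by rw [hMA, Matrix.one_mul]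
      _ = A⁻¹ * ((A * B) * A'⁻¹) := by simp only [Matrix.mul_assoc]
      _ = A⁻¹ * ((B * A') * A'⁻¹) := by rw [hBA]
      _ = A⁻¹ * (B * (A' * A'⁻¹)) := by simp only [Matrix.mul_assoc]
      _ = A⁻¹ * B := by rw [hAN, Matrix.mul_one]
  have hCA : C * A = A' * C := by
    rw [hA, hA', Matrix.mul_sub, Matrix.sub_mul, Matrix.mul_one, Matrix.one_mul,
      Matrix.mul_smul, Matrix.smul_mul, Matrix.mul_assoc]
  have hCM : C * A⁻¹ = A'⁻¹ * C := by
    calc C * A⁻¹ = A'⁻¹ * A' * (C * A⁻¹) := by rw [hNA, Matrix.one_mul]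
      _ = A'⁻¹ * ((A' * C) * A⁻¹) := by simp only [Matrix.mul_assoc]
      _ = A'⁻¹ * ((C * A) * A⁻¹) := by rw [hCA]
      _ = A'⁻¹ * (C * (A * A⁻¹)) := by simp only [Matrix.mul_assoc]
      _ = A'⁻¹ * C := by rw [hAM, Matrix.mul_one]
  have hinj : ∀ v w : Fin m → ℝ, A.mulVec v = A.mulVec w → v = w := by
    intro v w h
    have := congrArg A⁻¹.mulVec h
    simpa [Matrix.mulVec_mulVec, hMA] using this
  have hinj' : ∀ v w : Fin n → ℝ, A'.mulVec v = A'.mulVec w → v = w := by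
    intro v w h
    have := congrArg A'⁻¹.mulVec h
    simpa [Matrix.mulVec_mulVec, hNA] using this
  have hxfix : xstar = -η • (a + B.mulVec ystar) := by
    apply hinj
    show A.mulVec (-η • (A⁻¹.mulVec (a - η • B.mulVec c))) =
      A.mulVec (-η • (a + B.mulVec (-η • (A'⁻¹.mulVec (c - η • C.mulVec a)))))
    simp only [Matrix.mulVec_smul, Matrix.mulVec_add, Matrix.mulVec_mulVec]
    rw [hAM, hBN, ← Matrix.mul_assoc, hAM, Matrix.one_mul, Matrix.one_mulVec]
    simp only [hA, Matrix.sub_mulVec, Matrix.one_mulVec, Matrix.smul_mulVec,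
      Matrix.mulVec_sub, Matrix.mulVec_smul, Matrix.mulVec_mulVec]
    module
  have hyfix : ystar = -η • (c + C.mulVec xstar) := by
    apply hinj'
    show A'.mulVec (-η • (A'⁻¹.mulVec (c - η • C.mulVec a))) =
      A'.mulVec (-η • (c + C.mulVec (-η • (A⁻¹.mulVec (a - η • B.mulVec c)))))
    simp only [Matrix.mulVec_smul, Matrix.mulVec_add, Matrix.mulVec_mulVec]
    rw [hAN, hCM, ← Matrix.mul_assoc, hAN, Matrix.one_mul, Matrix.one_mulVec]
    simp only [hA', Matrix.sub_mulVec, Matrix.one_mulVec, Matrix.smul_mulVec,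
      Matrix.mulVec_sub, Matrix.mulVec_smul, Matrix.mulVec_mulVec]
    module
  constructor
  · intro x
    have key := quad_min η hη (a + B.mulVec ystar) x
    simp only [dotProduct_add] at key
    show xstar ⬝ᵥ a + xstar ⬝ᵥ B.mulVec ystar + (1 / (2 * η)) * (xstar ⬝ᵥ xstar) ≤ _
    rw [hxfix]
    linarith [key]
  · intro y
    have key := quad_min η hη (c + C.mulVec xstar) y
    simp only [dotProduct_add] at key
    show ystar ⬝ᵥ c + ystar ⬝ᵥ C.mulVec xstar + (1 / (2 * η)) * (ystar ⬝ᵥ ystar) ≤ _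
    rw [hyfix]
    linarith [key]
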